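/- Let E, F be real Banach spaces and T₀ ∈ B(E,F). Let R₀ and E₊ be closed subspaces of E with R₀ ≠ {0} such that E = ker T₀ ⊕ R₀ and E = E₊ ⊕ R₀. Let P denote the continuous projection onto R₀ with kernel E₊. Then T₀ and T₀ ∘ P are path connected in the set S = { T ∈ B(E,F) : E = ker T ⊕ R₀ and range T = range T₀ }. -/

import Mathlib

lemma aux_mem_S
    {E : Type*} [NormedAddCommGroup E] [NormedSpace ℝ E]
    {F : Type*} [NormedAddCommGroup F] [NormedSpace ℝ F]
    (T₀ : E →L[ℝ] F)
    (R₀ Estar : Submodule ℝ E)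
    (h₁ : IsCompl (LinearMap.ker (T₀ : E →ₗ[ℝ] F)) R₀) (h₂ : IsCompl Estar R₀)
    (P : E →L[ℝ] E)
    (hPfix : ∀ x ∈ R₀, P x = x) (hPker : ∀ x ∈ Estar, P x = 0)
    (t : ℝ) :
    IsCompl (LinearMap.ker (((1 - t) • T₀ + t • T₀.comp P : E →L[ℝ] F) : E →ₗ[ℝ] F)) R₀ ∧
      LinearMap.range (((1 - t) • T₀ + t • T₀.comp P : E →L[ℝ] F) : E →ₗ[ℝ] F) =
        LinearMap.range (T₀ : E →ₗ[ℝ] F) := by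
  set T : E →L[ℝ] F := (1 - t) • T₀ + t • T₀.comp P with hT
  have hTapp : ∀ x : E, T x = (1 - t) • T₀ x + t • T₀ (P x) := fun x => rfl
  constructor
  · constructor
    · rw [disjoint_iff]
      apply Submodule.eq_bot_iff _ |>.2
      rintro x ⟨hx1, hx2⟩
      have hx1' : T x = 0 := hx1
      rw [hTapp, hPfix x hx2, ← map_smul, ← map_smul, ← map_add] at hx1'
      have : (1 - t) • x + t • x = x := by module
      rw [this] at hx1'
      have : x ∈ LinearMap.ker (T₀ : E →ₗ[ℝ] F) ⊓ R₀ := ⟨hx1', hx2⟩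
      rw [h₁.disjoint.eq_bot] at this
      exact this
    · rw [codisjoint_iff, eq_top_iff]
      intro y _
      -- decompose y = u + v with u ∈ Estar, v ∈ R₀
      have hy : y ∈ Estar ⊔ R₀ := by rw [h₂.codisjoint.eq_top]; trivial
      obtain ⟨u, hu, v, hv, rfl⟩ := Submodule.mem_sup.1 hy
      -- decompose -(1-t) • u = k + r with k ∈ ker T₀, r ∈ R₀
      have hz : (-(1 - t)) • u ∈ LinearMap.ker (T₀ : E →ₗ[ℝ] F) ⊔ R₀ := by
        rw [h₁.codisjoint.eq_top]; trivial
      obtain ⟨k, hk, r, hr, hkr⟩ := Submodule.mem_sup.1 hz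
      have hT₀r : T₀ r = (-(1 - t)) • T₀ u := by
        have := congrArg T₀ hkr
        rw [map_add, (show T₀ k = 0 from LinearMap.mem_ker.1 hk), zero_add, map_smul] at this
        exact this
      refine Submodule.mem_sup.2 ⟨u + r, ?_, v - r, R₀.sub_mem hv hr, by abel⟩
      rw [LinearMap.mem_ker, ContinuousLinearMap.coe_coe]
      have : T (u + r) = (1 - t) • T₀ u + (1 - t) • T₀ r + t • T₀ (P u + P r) := by
        rw [hTapp, map_add, map_add, smul_add]
      rw [this, hPker u hu, hPfix r hr, zero_add, hT₀r]
      module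
  · apply le_antisymm
    · rintro y ⟨x, rfl⟩
      exact ⟨(1 - t) • x + t • P x, by rw [ContinuousLinearMap.coe_coe, ContinuousLinearMap.coe_coe, hTapp, map_add, map_smul, map_smul]⟩
    · rintro y ⟨z, rfl⟩
      have hz : z ∈ LinearMap.ker (T₀ : E →ₗ[ℝ] F) ⊔ R₀ := by rw [h₁.codisjoint.eq_top]; trivial
      obtain ⟨k, hk, r, hr, rfl⟩ := Submodule.mem_sup.1 hz
      refine ⟨r, ?_⟩
      rw [ContinuousLinearMap.coe_coe, ContinuousLinearMap.coe_coe, hTapp, hPfix r hr, map_add, (show T₀ k = 0 from LinearMap.mem_ker.1 hk), zero_add]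
      module

/-- **Theorem 1.4.**
Let `E, F` be real Banach spaces and `T₀ ∈ B(E,F)`.  Let `R₀` and `Estar` be
closed subspaces of `E` with `R₀ ≠ {0}`, `E = ker T₀ ⊕ R₀` and `E = Estar ⊕ R₀`.
Let `P` be the continuous projection onto `R₀` with kernel `Estar`.  Then `T₀`
and `T₀ ∘ P` are path connected in the set
`S = { T ∈ B(E,F) : E = ker T ⊕ R₀ and range T = range T₀ }`. -/
theorem joined_to_precomposed_projection
    {E : Type*} [NormedAddCommGroup E] [NormedSpace ℝ E] [CompleteSpace E]
    {F : Type*} [NormedAddCommGroup F] [NormedSpace ℝ F] [CompleteSpace F]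
    (T₀ : E →L[ℝ] F)
    (R₀ Estar : Submodule ℝ E)
    (hR₀c : IsClosed (R₀ : Set E)) (hEsc : IsClosed (Estar : Set E))
    (hR₀ : R₀ ≠ ⊥)
    (h₁ : IsCompl (LinearMap.ker (T₀ : E →ₗ[ℝ] F)) R₀) (h₂ : IsCompl Estar R₀)
    (P : E →L[ℝ] E) (hPmem : ∀ x : E, P x ∈ R₀)
    (hPfix : ∀ x ∈ R₀, P x = x) (hPker : ∀ x ∈ Estar, P x = 0) :
    JoinedIn {T : E →L[ℝ] F | IsCompl (LinearMap.ker (T : E →ₗ[ℝ] F)) R₀ ∧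
        LinearMap.range (T : E →ₗ[ℝ] F) = LinearMap.range (T₀ : E →ₗ[ℝ] F)}
      T₀ (T₀.comp P) := by
  refine ⟨⟨⟨fun s => (1 - (s : ℝ)) • T₀ + (s : ℝ) • T₀.comp P, ?_⟩, ?_, ?_⟩, ?_⟩
  · fun_prop
  · simp
  · simp
  · intro s
    exact aux_mem_S T₀ R₀ Estar h₁ h₂ P hPfix hPker s
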